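/- Let Y be a Polish space and let K be a compact metrizable topological group acting continuously on Y on the right. Let (X, μ) be a probability space, let T : X → X be an ergodic measure-preserving measurable map, and let F : X → Y be a Borel measurable function such that for μ-almost every x ∈ X there exists k ∈ K with F(T x) = F(x) · k. Then there exist a Borel measurable function φ : X → K and a point y₀ ∈ Y such that F(x) · φ(x) = y₀ for μ-almost every x ∈ X. -/

import Mathlib

open MeasureTheory
open Metric Set

noncomputable def selSeq {Y Z : Type*} [MetricSpace Z] (S : Y → Set Z) (u : ℕ → Z) :
    ℕ → Y → ℕ
  | 0 => fun y => sInf {j | (S y ∩ closedBall (u j) 1).Nonempty}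
  | (m+1) => fun y => sInf {j | (S y ∩ (closedBall (u j) ((1/2)^(m+1)) ∩
      closedBall (u (selSeq S u m y)) ((1/2)^m))).Nonempty}

theorem measurable_sInf_setOf {Y : Type*} [MeasurableSpace Y] {p : ℕ → Y → Prop}
    (hp : ∀ j, MeasurableSet {y | p j y}) :
    Measurable fun y => sInf {j | p j y} := by
  apply measurable_to_countable'
  intro n
  rcases eq_or_ne n 0 with rfl | hn
  · have : (fun y => sInf {j | p j y}) ⁻¹' {0} = {y | p 0 y} ∪ ⋂ m, {y | p m y}ᶜ := by
      ext y
      simp only [mem_preimage, mem_singleton_iff, Nat.sInf_eq_zero, mem_union, mem_iInter,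
        mem_compl_iff, mem_setOf_eq, eq_empty_iff_forall_notMem]
    rw [this]; exact (hp 0).union (MeasurableSet.iInter fun m => (hp m).compl)
  · have : (fun y => sInf {j | p j y}) ⁻¹' {n} =
        {y | p n y} ∩ ⋂ m ∈ Finset.range n, {y | p m y}ᶜ := by
      ext y
      simp only [mem_preimage, mem_singleton_iff, mem_inter_iff, mem_setOf_eq, mem_iInter,
        mem_compl_iff, Finset.mem_range]
      constructor
      · rintro rfl
        have hne : {j | p j y}.Nonempty := by
          by_contra h
          rw [not_nonempty_iff_eq_empty] at h
          exact hn (by rw [h]; exact Nat.sInf_empty)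
        exact ⟨Nat.sInf_mem hne, fun m hm => Nat.notMem_of_lt_sInf hm⟩
      · rintro ⟨hn', hlt⟩
        refine le_antisymm (Nat.sInf_le hn') (le_of_not_gt fun h => ?_)
        have hmem : sInf {j | p j y} ∈ {j | p j y} :=
          Nat.sInf_mem (⟨n, hn'⟩ : {j | p j y}.Nonempty)
        exact hlt _ h hmem
    rw [this]
    exact (hp n).inter (MeasurableSet.biInter ((Finset.range n).finite_toSet.countable)
      fun m _ => (hp m).compl)

theorem exists_measurable_selection_aux {Y Z : Type*} [MeasurableSpace Y]
    [MetricSpace Z] [CompactSpace Z] [Nonempty Z] [MeasurableSpace Z] [BorelSpace Z]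
    (S : Y → Set Z) (hScl : ∀ y, IsClosed (S y))
    (hhit : ∀ B : Set Z, IsClosed B → MeasurableSet {y | (S y ∩ B).Nonempty}) :
    ∃ σ : Y → Z, Measurable σ ∧ ∀ y, (S y).Nonempty → σ y ∈ S y := by
  have hsep : TopologicalSpace.SeparableSpace Z := inferInstance
  obtain ⟨u, hu⟩ := TopologicalSpace.exists_dense_seq Z
  set c := selSeq S u with hc
  -- invariant
  have hinv : ∀ y, (S y).Nonempty → ∀ m,
      (S y ∩ closedBall (u (c m y)) ((1/2)^m)).Nonempty := by
    intro y hy m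
    induction m with
    | zero =>
      obtain ⟨s, hs⟩ := hy
      obtain ⟨j, hj⟩ := hu.exists_dist_lt s (by norm_num : (0:ℝ) < 1)
      have hne : {j | (S y ∩ closedBall (u j) 1).Nonempty}.Nonempty :=
        ⟨j, ⟨s, hs, by simpa [dist_comm] using hj.le⟩⟩
      have := Nat.sInf_mem hne
      simpa [hc, selSeq] using this
    | succ m ih =>
      obtain ⟨s, hsS, hsB⟩ := ih
      obtain ⟨j, hj⟩ := hu.exists_dist_lt s (by positivity : (0:ℝ) < (1/2)^(m+1))
      have hne : {j | (S y ∩ (closedBall (u j) ((1/2)^(m+1)) ∩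
          closedBall (u (c m y)) ((1/2)^m))).Nonempty}.Nonempty :=
        ⟨j, ⟨s, hsS, ⟨by simpa [dist_comm] using hj.le, hsB⟩⟩⟩
      have hmem := Nat.sInf_mem hne
      have : (S y ∩ (closedBall (u (c (m+1) y)) ((1/2)^(m+1)) ∩
          closedBall (u (c m y)) ((1/2)^m))).Nonempty := by
        simpa [hc, selSeq] using hmem
      exact this.mono (inter_subset_inter_right _ (inter_subset_left))
  -- the sequence of approximations
  set f : ℕ → Y → Z := fun m y => u (c m y) with hf
  -- Cauchy for all y
  have hcauchy : ∀ y, CauchySeq fun m => f m y := by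
    intro y
    rcases eq_empty_or_nonempty (S y) with hSy | hSy
    · have hcz : ∀ m, c m y = 0 := by
        intro m
        induction m with
        | zero => simp [hc, selSeq, hSy, Nat.sInf_empty]
        | succ m ih => simp [hc, selSeq, hSy, Nat.sInf_empty]
      have : (fun m => f m y) = fun _ => u 0 := by
        funext m; simp [hf, hcz]
      rw [this]; exact cauchySeq_const _
    · apply cauchySeq_of_le_geometric (1/2 : ℝ) 3 (by norm_num)
      intro m
      obtain ⟨s, hsS, hsB⟩ := hinv y hSy m
      -- also s' in triple intersection at step m+1
      obtain ⟨s', hs'S, hs'B1, hs'B2⟩ : ∃ s', s' ∈ S y ∧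
          s' ∈ closedBall (u (c (m+1) y)) ((1/2)^(m+1)) ∧
          s' ∈ closedBall (u (c m y)) ((1/2)^m) := by
        obtain ⟨t, htS, htB⟩ := hinv y hSy m
        obtain ⟨j, hj⟩ := hu.exists_dist_lt t (by positivity : (0:ℝ) < (1/2)^(m+1))
        have hne : {j | (S y ∩ (closedBall (u j) ((1/2)^(m+1)) ∩
            closedBall (u (c m y)) ((1/2)^m))).Nonempty}.Nonempty :=
          ⟨j, ⟨t, htS, ⟨by simpa [dist_comm] using hj.le, htB⟩⟩⟩
        have hmem := Nat.sInf_mem hne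
        have : (S y ∩ (closedBall (u (c (m+1) y)) ((1/2)^(m+1)) ∩
            closedBall (u (c m y)) ((1/2)^m))).Nonempty := by
          simpa [hc, selSeq] using hmem
        obtain ⟨s', h1, h2, h3⟩ := this
        exact ⟨s', h1, h2, h3⟩
      have : dist (f m y) (f (m+1) y) ≤ (1/2)^m + (1/2)^(m+1) := by
        calc dist (f m y) (f (m+1) y) ≤ dist (f m y) s' + dist s' (f (m+1) y) :=
          dist_triangle _ _ _
        _ ≤ (1/2)^m + (1/2)^(m+1) := by
            have h1 : dist s' (u (c m y)) ≤ (1/2)^m := mem_closedBall.1 hs'B2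
            have h2 : dist s' (u (c (m+1) y)) ≤ (1/2)^(m+1) := mem_closedBall.1 hs'B1
            rw [dist_comm (f m y) s']
            exact add_le_add h1 h2
      refine this.trans ?_
      have : ((1:ℝ)/2)^(m+1) ≤ (1/2)^m := by
        apply pow_le_pow_of_le_one <;> norm_num
      nlinarith [pow_pos (by norm_num : (0:ℝ) < 1/2) m]
  have hlim : ∀ y, ∃ z, Filter.Tendsto (fun m => f m y) Filter.atTop (nhds z) :=
    fun y => cauchySeq_tendsto_of_complete (hcauchy y)
  set σ : Y → Z := fun y => (hlim y).choose with hσ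
  have hσlim : ∀ y, Filter.Tendsto (fun m => f m y) Filter.atTop (nhds (σ y)) :=
    fun y => (hlim y).choose_spec
  -- measurability of c m
  have hcm : ∀ m, Measurable (c m) := by
    intro m
    induction m with
    | zero =>
      exact measurable_sInf_setOf fun j => hhit _ isClosed_closedBall
    | succ m ih =>
      apply measurable_sInf_setOf
      intro j
      have : {y | (S y ∩ (closedBall (u j) ((1/2)^(m+1)) ∩
          closedBall (u (c m y)) ((1/2)^m))).Nonempty} =
          ⋃ n, ((c m) ⁻¹' {n} ∩ {y | (S y ∩ (closedBall (u j) ((1/2)^(m+1)) ∩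
            closedBall (u n) ((1/2)^m))).Nonempty}) := by
        ext y
        simp only [mem_iUnion, mem_inter_iff, mem_preimage, mem_singleton_iff, mem_setOf_eq]
        constructor
        · intro h; exact ⟨c m y, rfl, h⟩
        · rintro ⟨n, rfl, h⟩; exact h
      rw [this]
      exact MeasurableSet.iUnion fun n => (ih (measurableSet_singleton n)).inter
        (hhit _ (isClosed_closedBall.inter isClosed_closedBall))
  refine ⟨σ, ?_, ?_⟩
  · exact measurable_of_tendsto_metrizable' Filter.atTop
      (fun m => (measurable_from_top.comp (hcm m)))
      (by rw [tendsto_pi_nhds]; exact hσlim)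
  · intro y hy
    have : σ y ∈ closure (S y) := by
      rw [Metric.mem_closure_iff]
      intro ε hε
      obtain ⟨m, hm⟩ := exists_pow_lt_of_lt_one (by positivity : (0:ℝ) < ε/2)
        (by norm_num : (1:ℝ)/2 < 1)
      obtain ⟨m', hm', hdist⟩ : ∃ m', m ≤ m' ∧ dist (σ y) (f m' y) < ε/2 := by
        have := (hσlim y).eventually (Metric.ball_mem_nhds (σ y) (by positivity : (0:ℝ) < ε/2))
        obtain ⟨m', hm'⟩ := ((this.and (Filter.eventually_ge_atTop m)).exists)
        exact ⟨m', hm'.2, by simpa [dist_comm] using hm'.1⟩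
      obtain ⟨s, hsS, hsB⟩ := hinv y hy m'
      refine ⟨s, hsS, ?_⟩
      have h1 : dist s (f m' y) ≤ (1/2)^m' := mem_closedBall.1 hsB
      have h2 : ((1:ℝ)/2)^m' ≤ (1/2)^m := pow_le_pow_of_le_one (by norm_num) (by norm_num) hm'
      calc dist (σ y) s ≤ dist (σ y) (f m' y) + dist (f m' y) s := dist_triangle _ _ _
      _ < ε/2 + (1/2)^m := by
          rw [dist_comm (f m' y) s]; exact add_lt_add_of_lt_of_le hdist (h1.trans h2)
      _ < ε/2 + ε/2 := by linarith
      _ = ε := by ring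
    exact (hScl y).closure_subset this


/-- Let a compact metrizable group `K` act continuously on the right on a
Polish space `Y`, let `T` be an ergodic measure-preserving map of a probability space
`(X, μ)`, and let `F : X → Y` be Borel such that for a.e. `x` the point `F(Tx)` lies in
the `K`-orbit of `F(x)`. Then there are a Borel map `φ : X → K` and a point `y₀ ∈ Y`
with `F(x) · φ(x) = y₀` for a.e. `x`. -/
theorem exists_measurable_trivializing_map_of_ergodic
    {Y K X : Type*}
    [TopologicalSpace Y] [PolishSpace Y] [MeasurableSpace Y] [BorelSpace Y]
    [Group K] [TopologicalSpace K] [IsTopologicalGroup K] [CompactSpace K]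
    [TopologicalSpace.MetrizableSpace K] [MeasurableSpace K] [BorelSpace K]
    (act : Y → K → Y)
    (hact_cont : Continuous fun p : Y × K => act p.1 p.2)
    (hact_one : ∀ y, act y 1 = y)
    (hact_mul : ∀ y k k', act (act y k) k' = act y (k * k'))
    [MeasurableSpace X] (μ : Measure X) [IsProbabilityMeasure μ]
    (T : X → X) (hT : Ergodic T μ)
    (F : X → Y) (hF : Measurable F)
    (horb : ∀ᵐ x ∂μ, ∃ k : K, F (T x) = act (F x) k) :
    ∃ (φ : X → K) (y₀ : Y), Measurable φ ∧ ∀ᵐ x ∂μ, act (F x) (φ x) = y₀ := by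
  classical
  have hXne : Nonempty X := by
    by_contra h
    rw [not_nonempty_iff] at h
    have h1 : μ Set.univ = 1 := measure_univ
    rw [Set.univ_eq_empty_iff.2 h, measure_empty] at h1
    exact zero_ne_one h1
  have hYne : Nonempty Y := ⟨F (Classical.arbitrary X)⟩
  letI := TopologicalSpace.upgradeIsCompletelyMetrizable Y
  letI : MetricSpace K := TopologicalSpace.metrizableSpaceMetric K
  -- continuity in y of each single-orbit point map
  have hacty : ∀ y : Y, Continuous (act y) := fun y =>
    hact_cont.comp (continuous_const.prodMk continuous_id)
  -- the orbit of each point, as a set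
  set R : Y → Set Y := fun y => Set.range (act y) with hR
  have hRne : ∀ y, (R y).Nonempty := fun y => ⟨act y 1, 1, rfl⟩
  have hRcompact : ∀ y, IsCompact (R y) := fun y => isCompact_range (hacty y)
  have hRinv : ∀ y k, R (act y k) = R y := by
    intro y k
    ext z
    constructor
    · rintro ⟨k', rfl⟩
      exact ⟨k * k', (hact_mul y k k').symm⟩
    · rintro ⟨k', rfl⟩
      exact ⟨k⁻¹ * k', by rw [hact_mul, mul_inv_cancel_left]⟩
  -- continuity of y ↦ infDist z (R y)
  have hcont : ∀ z : Y, Continuous fun y => Metric.infDist z (R y) := by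
    intro z
    rw [continuous_iff_continuousAt]
    intro y
    rw [ContinuousAt, Metric.tendsto_nhds]
    intro ε hε
    have hUopen : IsOpen {p : Y × K | dist (act p.1 p.2) (act y p.2) < ε/2} :=
      isOpen_lt (hact_cont.dist (hact_cont.comp (continuous_const.prodMk continuous_snd)))
        continuous_const
    have hsub : ({y} : Set Y) ×ˢ (Set.univ : Set K) ⊆
        {p : Y × K | dist (act p.1 p.2) (act y p.2) < ε/2} := by
      rintro ⟨y', k⟩ ⟨hy', -⟩
      rcases hy' with rfl
      simpa using half_pos hε
    obtain ⟨u, v, huo, hvo, hyu, huv, hsub'⟩ :=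
      generalized_tube_lemma isCompact_singleton isCompact_univ hUopen hsub
    have hy_mem : y ∈ u := hyu rfl
    filter_upwards [huo.mem_nhds hy_mem] with w hw
    have hdk : ∀ k : K, dist (act w k) (act y k) < ε/2 := fun k =>
      hsub' (Set.mk_mem_prod hw (huv (Set.mem_univ k)))
    have key : ∀ (a b : Y), (∀ k : K, dist (act a k) (act b k) < ε/2) →
        Metric.infDist z (R a) ≤ Metric.infDist z (R b) + ε/2 := by
      intro a b hab
      by_contra hlt
      push_neg at hlt
      have : Metric.infDist z (R b) < Metric.infDist z (R a) - ε/2 := by linarith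
      obtain ⟨p, hp, hpd⟩ := (Metric.infDist_lt_iff (hRne b)).1 this
      obtain ⟨k, rfl⟩ := hp
      have h1 : Metric.infDist z (R a) ≤ dist z (act a k) :=
        Metric.infDist_le_dist_of_mem ⟨k, rfl⟩
      have h2 : dist z (act a k) ≤ dist z (act b k) + dist (act b k) (act a k) :=
        dist_triangle _ _ _
      have h3 : dist (act b k) (act a k) < ε/2 := by rw [dist_comm]; exact hab k
      linarith
    have hA := key w y hdk
    have hB := key y w (fun k => by rw [dist_comm]; exact hdk k)
    rw [Real.dist_eq, abs_sub_lt_iff]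
    constructor <;> linarith
  -- dense sequence in Y
  obtain ⟨d, hd⟩ := TopologicalSpace.exists_dense_seq Y
  -- each test function is a.e. invariant, hence a.e. constant
  have hrange_eq : ∀ᵐ x ∂μ, R (F (T x)) = R (F x) := by
    filter_upwards [horb] with x ⟨k, hk⟩
    rw [hk, hRinv]
  have hgc : ∀ n : ℕ, ∃ c : ℝ, (fun x => Metric.infDist (d n) (R (F x))) =ᵐ[μ]
      Function.const X c := by
    intro n
    apply hT.ae_eq_const_of_ae_eq_comp₀
    · exact (((hcont (d n)).measurable).comp hF).nullMeasurable
    · filter_upwards [hrange_eq] with x hx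
      simp only [Function.comp_apply, hx]
  choose c hc using hgc
  haveI : (MeasureTheory.ae μ).NeBot := ae_neBot.2 (IsProbabilityMeasure.ne_zero μ)
  have hall : ∀ᵐ x ∂μ, ∀ n, Metric.infDist (d n) (R (F x)) = c n :=
    MeasureTheory.ae_all_iff.2 fun n => hc n
  obtain ⟨x₀, hx₀⟩ := hall.exists
  set y₀ : Y := F x₀ with hy₀def
  -- a.e., y₀ lies in the orbit of F x
  have hy₀ : ∀ᵐ x ∂μ, ∃ k : K, act (F x) k = y₀ := by
    filter_upwards [hall] with x hx
    have heq : (fun z => Metric.infDist z (R (F x))) = fun z => Metric.infDist z (R (F x₀)) := by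
      apply Continuous.ext_on (hd : Dense (Set.range d)) (Metric.continuous_infDist_pt _)
        (Metric.continuous_infDist_pt _)
      rintro z ⟨n, rfl⟩
      show Metric.infDist (d n) (R (F x)) = Metric.infDist (d n) (R (F x₀))
      rw [hx n, hx₀ n]
    have h0 : Metric.infDist y₀ (R (F x)) = 0 := by
      have := congrFun heq y₀
      rw [this]
      exact Metric.infDist_zero_of_mem ⟨1, (hact_one _)⟩
    have hmem : y₀ ∈ R (F x) :=
      ((hRcompact (F x)).isClosed.mem_iff_infDist_zero (hRne _)).2 h0
    obtain ⟨k, hk⟩ := hmem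
    exact ⟨k, hk⟩
  -- measurable selection on Y
  set S : Y → Set K := fun y => {k | act y k = y₀} with hS
  have hScl : ∀ y, IsClosed (S y) := fun y =>
    isClosed_singleton.preimage (hacty y)
  have hhit : ∀ B : Set K, IsClosed B → MeasurableSet {y | (S y ∩ B).Nonempty} := by
    intro B hB
    have hset : {y | (S y ∩ B).Nonempty} =
        Prod.fst '' {p : Y × K | act p.1 p.2 = y₀ ∧ p.2 ∈ B} := by
      ext y
      simp only [Set.mem_setOf_eq, Set.mem_image, Set.Nonempty, Set.mem_inter_iff]
      constructor
      · rintro ⟨k, hk1, hk2⟩; exact ⟨(y, k), ⟨hk1, hk2⟩, rfl⟩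
      · rintro ⟨⟨y', k⟩, ⟨h1, h2⟩, rfl⟩; exact ⟨k, h1, h2⟩
    rw [hset]
    have hcl : IsClosed {p : Y × K | act p.1 p.2 = y₀ ∧ p.2 ∈ B} :=
      (isClosed_singleton.preimage hact_cont).inter (hB.preimage continuous_snd)
    exact (isClosedMap_fst_of_compactSpace _ hcl).measurableSet
  obtain ⟨σ, hσm, hσsel⟩ := exists_measurable_selection_aux S hScl hhit
  refine ⟨σ ∘ F, y₀, hσm.comp hF, ?_⟩
  filter_upwards [hy₀] with x hx
  obtain ⟨k, hk⟩ := hx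
  exact hσsel (F x) ⟨k, hk⟩
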